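/- Let P be a probability measure, L an event, and γ_1, …, γ_k a nonempty finite family of events such that for any two indices i ≠ j the events γ_i and γ_j are either disjoint or one is contained in the other, P(γ_i) > 0 for every i, and P(L | γ_i) > P(L) for every i. Let Γ = γ_1 ∪ … ∪ γ_k. Then P(L | Γ) > P(L). (This is the abstract content of the claim that a local probability-raising cause, given as a set of finite paths whose cylinder sets are pairwise nested or disjoint, is also a global probability-raising cause.) -/

import Mathlib

open MeasureTheory

/-- Conditional probability `P(A | B) = P(A ∩ B) / P(B)` as a real number. -/
noncomputable def condP {Ω : Type*} [MeasurableSpace Ω] (μ : Measure Ω) (A B : Set Ω) : ℝ :=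
  (μ (A ∩ B)).toReal / (μ B).toReal

theorem stmt_5 {Ω : Type*} [MeasurableSpace Ω] (μ : Measure Ω) [IsProbabilityMeasure μ]
    (L : Set Ω) (hL : MeasurableSet L)
    (k : ℕ) (hk : 0 < k)
    (γ : Fin k → Set Ω) (hγm : ∀ i, MeasurableSet (γ i))
    (hnest : ∀ i j, i ≠ j → Disjoint (γ i) (γ j) ∨ γ i ⊆ γ j ∨ γ j ⊆ γ i)
    (hpos : ∀ i, 0 < (μ (γ i)).toReal)
    (hloc : ∀ i, condP μ L (γ i) > (μ L).toReal) :
    condP μ L (⋃ i, γ i) > (μ L).toReal := by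
  classical
  set T : Finset (Set Ω) := Finset.image γ Finset.univ with hT
  set M : Finset (Set Ω) := T.filter (fun A => ∀ B ∈ T, A ⊆ B → A = B) with hM
  have hMT : M ⊆ T := Finset.filter_subset _ _
  -- every element of T is below some maximal element
  have hmax : ∀ A ∈ T, ∃ B ∈ M, A ⊆ B := by
    intro A hA
    have hfin : ({B | B ∈ T ∧ A ⊆ B} : Set (Set Ω)).Finite :=
      T.finite_toSet.subset (fun B hB => hB.1)
    obtain ⟨C, hC, hCmax⟩ := Set.Finite.exists_maximalFor id _ hfin ⟨A, hA, subset_rfl⟩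
    refine ⟨C, ?_, hC.2⟩
    rw [hM, Finset.mem_filter]
    exact ⟨hC.1, fun B hB hCB => subset_antisymm hCB (hCmax ⟨hB, hC.2.trans hCB⟩ hCB)⟩
  -- maximal elements are pairwise disjoint
  have hdisj : (↑M : Set (Set Ω)).PairwiseDisjoint (fun A => A) := by
    intro A hA B hB hAB
    have hA' := (Finset.mem_filter.mp hA)
    have hB' := (Finset.mem_filter.mp hB)
    obtain ⟨i, _, hi⟩ := Finset.mem_image.mp hA'.1
    obtain ⟨j, _, hj⟩ := Finset.mem_image.mp hB'.1
    have hij : i ≠ j := by rintro rfl; exact hAB (hi.symm.trans hj)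
    rcases hnest i j hij with h | h | h
    · rw [← hi, ← hj]; exact h
    · exact absurd (hA'.2 B hB'.1 (by rw [hi, hj] at h; exact h)) hAB
    · exact absurd ((hB'.2 A hA'.1 (by rw [hi, hj] at h; exact h)).symm) hAB
  have hMmeas : ∀ A ∈ M, MeasurableSet A := by
    intro A hA
    obtain ⟨i, _, hi⟩ := Finset.mem_image.mp (hMT hA)
    exact hi ▸ hγm i
  -- the union equals the union over M
  have hunion : (⋃ i, γ i) = ⋃ A ∈ M, A := by
    apply Set.Subset.antisymm
    · refine Set.iUnion_subset fun i => ?_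
      obtain ⟨B, hB, hsub⟩ := hmax (γ i) (Finset.mem_image.mpr ⟨i, Finset.mem_univ i, rfl⟩)
      exact fun x hx => Set.mem_biUnion hB (hsub hx)
    · refine Set.iUnion₂_subset fun A hA => ?_
      obtain ⟨i, _, hi⟩ := Finset.mem_image.mp (hMT hA)
      exact hi ▸ Set.subset_iUnion γ i
  have hne : ∀ s : Set Ω, μ s ≠ ⊤ := fun s => measure_ne_top μ s
  -- measure of the union
  have hμU : (μ (⋃ i, γ i)).toReal = ∑ A ∈ M, (μ A).toReal := by
    rw [hunion, measure_biUnion_finset hdisj hMmeas, ENNReal.toReal_sum (fun A _ => hne A)]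
  have hdisjL : (↑M : Set (Set Ω)).PairwiseDisjoint (fun A => L ∩ A) := by
    intro A hA B hB hAB
    exact (hdisj hA hB hAB).mono Set.inter_subset_right Set.inter_subset_right
  have hμLU : (μ (L ∩ ⋃ i, γ i)).toReal = ∑ A ∈ M, (μ (L ∩ A)).toReal := by
    rw [hunion, Set.inter_iUnion₂,
      measure_biUnion_finset hdisjL (fun A hA => hL.inter (hMmeas A hA)),
      ENNReal.toReal_sum (fun A _ => hne _)]
  -- M nonempty
  have hMne : M.Nonempty := by
    obtain ⟨B, hB, _⟩ := hmax (γ ⟨0, hk⟩)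
      (Finset.mem_image.mpr ⟨⟨0, hk⟩, Finset.mem_univ _, rfl⟩)
    exact ⟨B, hB⟩
  -- local strict inequalities
  have hterm : ∀ A ∈ M, (μ L).toReal * (μ A).toReal < (μ (L ∩ A)).toReal := by
    intro A hA
    obtain ⟨i, _, hi⟩ := Finset.mem_image.mp (hMT hA)
    subst hi
    have := hloc i
    rw [condP, gt_iff_lt, lt_div_iff₀ (hpos i)] at this
    exact this
  have hsum : (μ L).toReal * (μ (⋃ i, γ i)).toReal < (μ (L ∩ ⋃ i, γ i)).toReal := by
    rw [hμU, hμLU, Finset.mul_sum]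
    exact Finset.sum_lt_sum_of_nonempty hMne hterm
  have hUpos : 0 < (μ (⋃ i, γ i)).toReal := by
    rcases hMne with ⟨A, hA⟩
    obtain ⟨i, _, hi⟩ := Finset.mem_image.mp (hMT hA)
    calc 0 < (μ (γ i)).toReal := hpos i
    _ ≤ (μ (⋃ i, γ i)).toReal := by
        apply ENNReal.toReal_mono (hne _)
        exact measure_mono (Set.subset_iUnion γ i)
  rw [condP, gt_iff_lt, lt_div_iff₀ hUpos]
  exact hsum
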